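/- Let P and Q be finite nonempty posets, and assume P is connected, P is not a chain, and P is rooted. Then the duality condition L(P,Q)^∨ = L(Q,P)^τ holds if and only if Q is rooted. -/

import Mathlib

open MvPolynomial

/-- The ideal `L(P,Q)` generated by the monomials `u_φ = ∏_{p∈P} x_{p,φ(p)}`
over all isotone maps `φ : P → Q`. -/
noncomputable def isoL (P Q K : Type*) [PartialOrder P] [PartialOrder Q] [Fintype P]
    [Field K] : Ideal (MvPolynomial (P × Q) K) :=
  Ideal.span { u | ∃ φ : P →o Q, u = ∏ p : P, X (p, φ p) }

/-- The Alexander dual `L(P,Q)^∨ = ⋂_{φ} (x_{p,φ(p)} : p ∈ P)`. -/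
noncomputable def isoDual (P Q K : Type*) [PartialOrder P] [PartialOrder Q]
    [Field K] : Ideal (MvPolynomial (P × Q) K) :=
  ⨅ φ : P →o Q, Ideal.span { u | ∃ p : P, u = X (p, φ p) }

/-- The ideal `L(Q,P)^τ ⊆ K[x_{pq}]` generated by `∏_{q∈Q} x_{ψ(q),q}` for `ψ ∈ Hom(Q,P)`. -/
noncomputable def isoTau (P Q K : Type*) [PartialOrder P] [PartialOrder Q] [Fintype Q]
    [Field K] : Ideal (MvPolynomial (P × Q) K) :=
  Ideal.span { u | ∃ ψ : Q →o P, u = ∏ q : Q, X (ψ q, q) }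

/-- The prime ideal `𝔭_ψ = (x_{ψ(q),q} : q ∈ Q)`. -/
noncomputable def pPsi (P Q K : Type*) [PartialOrder P] [PartialOrder Q]
    [Field K] (ψ : Q →o P) : Ideal (MvPolynomial (P × Q) K) :=
  Ideal.span { u | ∃ q : Q, u = X (ψ q, q) }

/-- The height of an ideal: the infimum of the heights (in the prime spectrum)
of the prime ideals containing it. -/
noncomputable def idealHeight {R : Type*} [CommRing R] (I : Ideal R) : ℕ∞ :=
  ⨅ J : {J : PrimeSpectrum R // I ≤ J.asIdeal}, Order.height J.1

/-- `P` is connected: any two elements are linked by a chain of comparabilities. -/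
def PosetConnected (P : Type*) [PartialOrder P] : Prop :=
  ∀ a b : P, Relation.ReflTransGen (fun x y : P => x ≤ y ∨ y ≤ x) a b

/-- `P` is rooted: two incomparable elements have no common strict upper bound. -/
def Rooted (P : Type*) [PartialOrder P] : Prop :=
  ∀ p₁ p₂ p : P, ¬ p₁ ≤ p₂ → ¬ p₂ ≤ p₁ → ¬ (p₁ < p ∧ p₂ < p)

/-- `P` is co-rooted: two incomparable elements have no common strict lower bound. -/
def CoRooted (P : Type*) [PartialOrder P] : Prop :=
  ∀ p₁ p₂ p : P, ¬ p₁ ≤ p₂ → ¬ p₂ ≤ p₁ → ¬ (p < p₁ ∧ p < p₂)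

/-- `P` is a chain, i.e. totally ordered. -/
def IsChainPoset (P : Type*) [PartialOrder P] : Prop :=
  ∀ a b : P, a ≤ b ∨ b ≤ a


/-! ### Auxiliary lemmas -/

section AuxHQS

lemma finset_exists_maximal_aux {α : Type*} [Preorder α] (s : Finset α) (h : s.Nonempty) :
    ∃ m ∈ s, ∀ x ∈ s, ¬ m < x := by
  obtain ⟨m, hm, hmax⟩ := Finset.exists_maximal h
  exact ⟨m, hm, fun x hx hlt => hlt.not_ge (hmax hx hlt.le)⟩

lemma finset_exists_minimal_aux {α : Type*} [Preorder α] (s : Finset α) (h : s.Nonempty) :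
    ∃ m ∈ s, ∀ x ∈ s, ¬ x < m := by
  obtain ⟨m, hm, hmin⟩ := Finset.exists_minimal h
  exact ⟨m, hm, fun x hx hlt => hlt.not_ge (hmin hx hlt.le)⟩

lemma prod_X_eq_monomial' {σ K : Type*} [CommSemiring K] {ι : Type*} [DecidableEq ι]
    (s : Finset ι) (f : ι → σ) :
    (∏ i ∈ s, (X (f i) : MvPolynomial σ K)) =
      monomial (∑ i ∈ s, Finsupp.single (f i) 1) 1 := by
  induction s using Finset.induction with
  | empty => simp [monomial_zero']
  | insert _ _ h ih =>
      rw [Finset.prod_insert h, Finset.sum_insert h, ih, ← pow_one (X (f _)),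
        X_pow_eq_monomial, monomial_mul, one_mul]

lemma dF_apply {σ : Type*} [DecidableEq σ] (F : Finset σ) (t : σ) :
    (∑ s ∈ F, Finsupp.single s (1:ℕ)) t = if t ∈ F then 1 else 0 := by
  rw [Finset.sum_apply']
  simp only [Finsupp.single_apply]
  rw [Finset.sum_ite_eq' F t (fun _ => 1)]

lemma dpsi_apply {P Q : Type*} [DecidableEq P] [DecidableEq Q] [Fintype Q]
    (ψ : Q → P) (s : P × Q) :
    (∑ q : Q, Finsupp.single ((ψ q, q) : P × Q) (1:ℕ)) s
      = if ψ s.2 = s.1 then 1 else 0 := by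
  obtain ⟨a, b⟩ := s
  rw [Finset.sum_apply', Finset.sum_eq_single b]
  · rw [Finsupp.single_apply]
    simp [Prod.ext_iff]
  · intro c _ hc
    rw [Finsupp.single_apply, if_neg]
    intro h
    exact hc (congrArg Prod.snd h)
  · simp

lemma exists_bot_of_connected_rooted {P : Type*} [PartialOrder P] [Fintype P] [Nonempty P]
    (hconn : PosetConnected P) (hroot : Rooted P) : ∃ m : P, ∀ p, m ≤ p := by
  obtain ⟨m, -, hmin⟩ := finset_exists_minimal_aux Finset.univ (Finset.univ_nonempty : (Finset.univ : Finset P).Nonempty)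
  refine ⟨m, fun p => ?_⟩
  induction hconn m p with
  | refl => exact le_refl m
  | tail hab hbc ih =>
      rename_i b c
      rcases hbc with h | h
      · exact le_trans ih h
      · by_cases hmc : m ≤ c
        · exact hmc
        · by_cases hcm : c ≤ m
          · have : ¬ c < m := hmin c (Finset.mem_univ c)
            have : c = m := le_antisymm hcm (by by_contra h2; exact this (lt_of_le_of_ne hcm (fun e => h2 (e ▸ le_refl c))))
            exact this ▸ le_refl m
          · exfalso
            have hmb : m ≠ b := fun e => hcm (e ▸ h)
            have hcb : c ≠ b := fun e => hmc (e ▸ ih)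
            exact hroot m c b hmc hcm ⟨lt_of_le_of_ne ih hmb, lt_of_le_of_ne h hcb⟩

lemma exists_fixed_point {Q : Type*} [PartialOrder Q] [Fintype Q] (f : Q →o Q)
    (q0 : Q) (h : q0 ≤ f q0) : ∃ q, f q = q := by
  classical
  obtain ⟨m, hm, hmax⟩ := finset_exists_maximal_aux
    (Finset.univ.filter fun q => q ≤ f q) ⟨q0, by simp [h]⟩
  simp only [Finset.mem_filter, Finset.mem_univ, true_and] at hm
  have h2 : f m ∈ Finset.univ.filter fun q => q ≤ f q := by
    simp only [Finset.mem_filter, Finset.mem_univ, true_and]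
    exact f.monotone hm
  rcases eq_or_lt_of_le hm with he | hl
  · exact ⟨m, he.symm⟩
  · exact absurd hl (hmax (f m) h2)


universe v

lemma core_aux {P : Type*} [PartialOrder P] (hrootP : Rooted P) (n : ℕ) :
    ∀ {Q : Type v} [PartialOrder Q] [Fintype Q], Fintype.card Q ≤ n → Rooted Q →
    ∀ T : Set (P × Q), (∀ φ : P →o Q, ∃ p, (p, φ p) ∈ T) →
    ∃ ψ : Q →o P, ∀ q, (ψ q, q) ∈ T := by
  classical
  induction n with
  | zero =>
      intro Q _ _ hcard _ T _
      have hQ : IsEmpty Q := Fintype.card_eq_zero_iff.mp (le_antisymm hcard (Nat.zero_le _))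
      exact ⟨⟨fun q => isEmptyElim q, fun a => isEmptyElim a⟩, fun q => isEmptyElim q⟩
  | succ n ih =>
      intro Q _ _ hcard hrootQ T hT
      by_cases hnontriv : ∃ q2 q1 : Q, q1 < q2
      · obtain ⟨q2, q1, h12⟩ := hnontriv
        -- find a maximal element qs above q2
        obtain ⟨qs, hqsmem, hqsmax0⟩ := finset_exists_maximal_aux
          (Finset.univ.filter fun x => q2 ≤ x) ⟨q2, by simp⟩
        simp only [Finset.mem_filter, Finset.mem_univ, true_and] at hqsmem
        have hqsmax : ∀ x : Q, ¬ qs < x := by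
          intro x hx
          exact hqsmax0 x (by simp [le_trans hqsmem hx.le]) hx
        -- maximal element qb of {x | x < qs}
        obtain ⟨qb, hqbmem, hqbmax0⟩ := finset_exists_maximal_aux
          (Finset.univ.filter fun x => x < qs) ⟨q1, by simp [lt_of_lt_of_le h12 hqsmem]⟩
        simp only [Finset.mem_filter, Finset.mem_univ, true_and] at hqbmem
        have hqbtop : ∀ x : Q, x < qs → x ≤ qb := by
          intro x hx
          by_cases hxb : x ≤ qb
          · exact hxb
          by_cases hbx : qb ≤ x
          · rcases lt_or_eq_of_le hbx with h | h
            · exact absurd h (hqbmax0 x (by simp [hx]))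
            · exact h ▸ le_refl x
          · exact absurd ⟨hx, hqbmem⟩ (hrootQ x qb qs hxb hbx)
        -- the subposet Q' = Q \ {qs}
        have hrootQ' : Rooted {x : Q // x ≠ qs} := by
          intro a b c hab hba habc
          exact hrootQ a.val b.val c.val
            (fun h => hab (Subtype.coe_le_coe.mp h))
            (fun h => hba (Subtype.coe_le_coe.mp h))
            ⟨Subtype.coe_lt_coe.mpr habc.1, Subtype.coe_lt_coe.mpr habc.2⟩
        have hcard' : Fintype.card {x : Q // x ≠ qs} ≤ n := by
          have h1 : Fintype.card {x : Q // x ≠ qs} < Fintype.card Q := by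
            simpa using Fintype.card_subtype_lt (p := fun x : Q => x ≠ qs) (x := qs) (by simp)
          omega
        -- the modified obstruction set
        set T' : Set (P × {x : Q // x ≠ qs}) :=
          {s | (s.1, (s.2 : Q)) ∈ T ∧
            ((s.2 : Q) = qb → ∃ p', (p', qs) ∈ T ∧ s.1 ≤ p')} with hT'def
        have hT' : ∀ φ' : P →o {x : Q // x ≠ qs}, ∃ p, (p, φ' p) ∈ T' := by
          intro φ'
          by_contra hno
          push_neg at hno
          set A : Set P := {p | ((φ' p : Q) = qb) ∧ (p, qb) ∈ T} with hAdef
          have hA : ∀ a ∈ A, ¬ ∃ p', (p', qs) ∈ T ∧ a ≤ p' := by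
            rintro a ⟨ha1, ha2⟩ hex
            exact hno a ⟨by rw [ha1]; exact ha2, fun _ => hex⟩
          have hmono'' : Monotone (fun p : P => if ∃ a ∈ A, a ≤ p then qs else (φ' p : Q)) := by
            intro x y hxy
            dsimp only
            by_cases hx : ∃ a ∈ A, a ≤ x
            · obtain ⟨a, haA, hax⟩ := hx
              rw [if_pos ⟨a, haA, hax⟩, if_pos ⟨a, haA, le_trans hax hxy⟩]
            · by_cases hy : ∃ a ∈ A, a ≤ y
              · rw [if_neg hx, if_pos hy]
                obtain ⟨a, haA, hay⟩ := hy
                by_cases hax : a ≤ x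
                · exact absurd ⟨a, haA, hax⟩ hx
                by_cases hxa : x ≤ a
                · calc (φ' x : Q) ≤ (φ' a : Q) := Subtype.coe_le_coe.mpr (φ'.monotone hxa)
                    _ = qb := haA.1
                    _ ≤ qs := hqbmem.le
                · exfalso
                  have hxney : x ≠ y := fun h => hax (h ▸ hay)
                  have haney : a ≠ y := fun h => hxa (h ▸ hxy)
                  exact hrootP x a y hxa hax
                    ⟨lt_of_le_of_ne hxy hxney, lt_of_le_of_ne hay haney⟩
              · rw [if_neg hx, if_neg hy]
                exact Subtype.coe_le_coe.mpr (φ'.monotone hxy)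
          obtain ⟨p, hp⟩ := hT ⟨_, hmono''⟩
          have hp' : (p, if ∃ a ∈ A, a ≤ p then qs else (φ' p : Q)) ∈ T := hp
          by_cases hup : ∃ a ∈ A, a ≤ p
          · rw [if_pos hup] at hp'
            obtain ⟨a, haA, hap⟩ := hup
            exact hA a haA ⟨p, hp', hap⟩
          · rw [if_neg hup] at hp'
            by_cases heq : (φ' p : Q) = qb
            · exact hup ⟨p, ⟨heq, heq ▸ hp'⟩, le_refl p⟩
            · exact hno p ⟨hp', fun h => absurd h heq⟩
        obtain ⟨ψ', hψ'⟩ := ih hcard' hrootQ' T' hT'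
        have hb := hψ' ⟨qb, ne_of_lt hqbmem⟩
        obtain ⟨ps, hps, hle⟩ := hb.2 rfl
        have hgmono : Monotone (fun q : Q => if h : q = qs then ps else ψ' ⟨q, h⟩) := by
          intro x y hxy
          dsimp only
          by_cases hx : x = qs
          · have hy : y = qs :=
              ((lt_or_eq_of_le (show qs ≤ y from hx ▸ hxy)).resolve_left (hqsmax y)).symm
            rw [dif_pos hx, dif_pos hy]
          · by_cases hy : y = qs
            · rw [dif_neg hx, dif_pos hy]
              have hxb : x ≤ qb := hqbtop x (lt_of_le_of_ne (hy ▸ hxy) hx)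
              calc ψ' ⟨x, hx⟩ ≤ ψ' ⟨qb, ne_of_lt hqbmem⟩ :=
                    ψ'.monotone (Subtype.mk_le_mk.mpr hxb)
                _ ≤ ps := hle
            · rw [dif_neg hx, dif_neg hy]
              exact ψ'.monotone (Subtype.mk_le_mk.mpr hxy)
        refine ⟨⟨_, hgmono⟩, fun q => ?_⟩
        show ((if h : q = qs then ps else ψ' ⟨q, h⟩), q) ∈ T
        by_cases h : q = qs
        · rw [dif_pos h]
          exact h ▸ hps
        · rw [dif_neg h]
          exact (hψ' ⟨q, h⟩).1
      · -- Q is an antichain (or empty)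
        push_neg at hnontriv
        have hsel : ∀ q : Q, ∃ p : P, (p, q) ∈ T := by
          intro q
          obtain ⟨p, hp⟩ := hT ⟨fun _ => q, monotone_const⟩
          exact ⟨p, hp⟩
        choose g hg using hsel
        refine ⟨⟨g, ?_⟩, hg⟩
        intro a b hab
        have : a = b := by
          by_contra hne
          exact absurd (lt_of_le_of_ne hab hne) (hnontriv b a)
        exact this ▸ le_refl (g a)


section MemIff

variable {P Q K : Type*} [PartialOrder P] [PartialOrder Q] [Field K]

lemma mem_isoDual_iff (f : MvPolynomial (P × Q) K) :
    f ∈ isoDual P Q K ↔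
      ∀ φ : P →o Q, ∀ e ∈ f.support, ∃ p : P, e (p, φ p) ≠ 0 := by
  rw [isoDual, Ideal.mem_iInf]
  refine forall_congr' fun φ => ?_
  have hset : {u : MvPolynomial (P × Q) K | ∃ p : P, u = X (p, φ p)} =
      X '' Set.range (fun p : P => (p, φ p)) := by
    ext u
    constructor
    · rintro ⟨p, rfl⟩; exact ⟨(p, φ p), ⟨p, rfl⟩, rfl⟩
    · rintro ⟨s, ⟨p, rfl⟩, rfl⟩; exact ⟨p, rfl⟩
  rw [hset, mem_ideal_span_X_image]
  constructor
  · intro h e he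
    obtain ⟨i, ⟨p, rfl⟩, hne⟩ := h e he
    exact ⟨p, hne⟩
  · intro h e he
    obtain ⟨p, hp⟩ := h e he
    exact ⟨(p, φ p), ⟨p, rfl⟩, hp⟩

lemma mem_isoTau_iff [Fintype Q] (f : MvPolynomial (P × Q) K) :
    f ∈ isoTau P Q K ↔
      ∀ e ∈ f.support, ∃ ψ : Q →o P, ∀ q : Q, e (ψ q, q) ≠ 0 := by
  classical
  have hset : {u : MvPolynomial (P × Q) K | ∃ ψ : Q →o P, u = ∏ q : Q, X (ψ q, q)} =
      (fun d => monomial d (1:K)) ''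
        {d | ∃ ψ : Q →o P, d = ∑ q : Q, Finsupp.single ((ψ q, q) : P × Q) 1} := by
    ext u
    simp only [Set.mem_setOf_eq, Set.mem_image]
    constructor
    · rintro ⟨ψ, rfl⟩
      exact ⟨_, ⟨ψ, rfl⟩, (prod_X_eq_monomial' _ _).symm⟩
    · rintro ⟨d, ⟨ψ, rfl⟩, rfl⟩
      exact ⟨ψ, (prod_X_eq_monomial' _ _).symm⟩
  rw [isoTau, hset, mem_ideal_span_monomial_image]
  refine forall₂_congr fun e he => ?_
  constructor
  · rintro ⟨d, ⟨ψ, rfl⟩, hle⟩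
    refine ⟨ψ, fun q => ?_⟩
    have h1 := Finsupp.le_def.mp hle (ψ q, q)
    rw [dpsi_apply (fun q => ψ q) (ψ q, q)] at h1
    simp at h1
    omega
  · rintro ⟨ψ, hψ⟩
    refine ⟨_, ⟨ψ, rfl⟩, Finsupp.le_def.mpr fun s => ?_⟩
    rw [dpsi_apply (fun q => ψ q) s]
    obtain ⟨a, b⟩ := s
    dsimp only
    split_ifs with h
    · subst h
      have := hψ b
      omega
    · exact Nat.zero_le _

end MemIff


end AuxHQS

/-- If `P` is connected, not a chain, and rooted, then
`L(P,Q)^∨ = L(Q,P)^τ` iff `Q` is rooted. -/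
theorem stmt_5 (P Q K : Type*) [PartialOrder P] [PartialOrder Q]
    [Fintype P] [Fintype Q] [Nonempty P] [Nonempty Q] [Field K]
    (hconn : PosetConnected P) (hchain : ¬ IsChainPoset P) (hroot : Rooted P) :
    isoDual P Q K = isoTau P Q K ↔ Rooted Q := by
  classical
  constructor
  · -- duality implies Q rooted (contrapositive)
    intro heq
    by_contra hQ
    rw [Rooted] at hQ
    push_neg at hQ
    obtain ⟨q1, q2, q, h12, h21, hlt1, hlt2⟩ := hQ
    rw [IsChainPoset] at hchain
    push_neg at hchain
    obtain ⟨p1, p2, hp12, hp21⟩ := hchain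
    -- the counterexample monomial
    set T : Set (P × Q) :=
      {s | (s.1 = p1 ∧ s.2 = q1) ∨ (s.1 = p2 ∧ s.2 = q2) ∨ (s.2 ≠ q1 ∧ s.2 ≠ q2)} with hTdef
    set F : Finset (P × Q) := Finset.univ.filter (· ∈ T) with hFdef
    set d : (P × Q) →₀ ℕ := ∑ s ∈ F, Finsupp.single s 1 with hddef
    have hdapp : ∀ t, d t = if t ∈ T then 1 else 0 := by
      intro t
      rw [hddef, dF_apply]
      simp [hFdef]
    have hsupp : (monomial d (1:K)).support = {d} := by
      rw [support_monomial, if_neg one_ne_zero]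
    have hmem : monomial d (1:K) ∈ isoDual P Q K := by
      rw [mem_isoDual_iff]
      intro φ e he
      rw [hsupp, Finset.mem_singleton] at he
      subst he
      by_contra hnone
      push_neg at hnone
      have havoid : ∀ p : P, (p, φ p) ∉ T := by
        intro p hpT
        have := hnone p
        rw [hdapp, if_pos hpT] at this
        exact one_ne_zero this
      have hval : ∀ p : P, φ p = q1 ∨ φ p = q2 := by
        intro p
        have h0 := havoid p
        rw [hTdef] at h0
        simp only [Set.mem_setOf_eq, not_or, not_and_or] at h0
        rcases h0.2.2 with h | h
        · exact Or.inl (not_not.mp h)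
        · exact Or.inr (not_not.mp h)
      have hne1 : φ p1 ≠ q1 := by
        intro h
        exact havoid p1 (Or.inl ⟨rfl, h⟩)
      have hne2 : φ p2 ≠ q2 := by
        intro h
        exact havoid p2 (Or.inr (Or.inl ⟨rfl, h⟩))
      have hconst : ∀ x y : P, φ x = φ y := by
        intro x y
        induction hconn x y with
        | refl => rfl
        | tail hab hbc ih =>
            rename_i b c
            have hcomp : φ b ≤ φ c ∨ φ c ≤ φ b := by
              rcases hbc with h | h
              · exact Or.inl (φ.monotone h)
              · exact Or.inr (φ.monotone h)
            have hbceq : φ b = φ c := by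
              rcases hval b with hb | hb <;> rcases hval c with hc | hc
              · rw [hb, hc]
              · exfalso; rw [hb, hc] at hcomp
                rcases hcomp with h | h
                · exact h12 h
                · exact h21 h
              · exfalso; rw [hb, hc] at hcomp
                rcases hcomp with h | h
                · exact h21 h
                · exact h12 h
              · rw [hb, hc]
            exact ih.trans hbceq
      have h1 : φ p1 = q2 := (hval p1).resolve_left hne1
      exact hne2 ((hconst p2 p1).trans h1 ▸ (hconst p2 p1).trans h1 ▸
        ((hval p2).resolve_left (fun h => hne1 ((hconst p1 p2).trans h))))
    have hnot : monomial d (1:K) ∉ isoTau P Q K := by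
      intro hmem'
      rw [mem_isoTau_iff] at hmem'
      obtain ⟨ψ, hψ⟩ := hmem' d (by rw [hsupp]; exact Finset.mem_singleton_self d)
      have hin : ∀ q' : Q, (ψ q', q') ∈ T := by
        intro q'
        have h0 := hψ q'
        rw [hdapp] at h0
        by_contra hnot'
        rw [if_neg hnot'] at h0
        exact h0 rfl
      have hq1 : ψ q1 = p1 := by
        have h0 := hin q1
        rw [hTdef] at h0
        rcases h0 with ⟨h, _⟩ | ⟨_, h⟩ | ⟨h, _⟩
        · exact h
        · exact absurd (h ▸ le_refl q1) h12
        · exact absurd rfl h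
      have hq2 : ψ q2 = p2 := by
        have h0 := hin q2
        rw [hTdef] at h0
        rcases h0 with ⟨_, h⟩ | ⟨h, _⟩ | ⟨_, h⟩
        · exact absurd (h ▸ le_refl q2) h21
        · exact h
        · exact absurd rfl h
      have hle1 : p1 ≤ ψ q := hq1 ▸ ψ.monotone hlt1.le
      have hle2 : p2 ≤ ψ q := hq2 ▸ ψ.monotone hlt2.le
      have hne1' : p1 ≠ ψ q := fun h => hp21 (h ▸ hle2)
      have hne2' : p2 ≠ ψ q := fun h => hp12 (h ▸ hle1)
      exact hroot p1 p2 (ψ q) hp12 hp21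
        ⟨lt_of_le_of_ne hle1 hne1', lt_of_le_of_ne hle2 hne2'⟩
    exact hnot (heq ▸ hmem)
  · intro hrootQ
    apply le_antisymm
    · -- dual ≤ tau
      intro f hf
      rw [mem_isoDual_iff] at hf
      rw [mem_isoTau_iff]
      intro e he
      obtain ⟨ψ, hψ⟩ := core_aux hroot (Fintype.card Q) le_rfl hrootQ
        {s : P × Q | e s ≠ 0} (fun φ => hf φ e he)
      exact ⟨ψ, hψ⟩
    · -- tau ≤ dual
      rw [isoTau, Ideal.span_le]
      rintro u ⟨ψ, rfl⟩
      rw [SetLike.mem_coe, mem_isoDual_iff]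
      intro φ e he
      rw [prod_X_eq_monomial' Finset.univ (fun q : Q => ((ψ q, q) : P × Q)),
        support_monomial, if_neg one_ne_zero, Finset.mem_singleton] at he
      subst he
      obtain ⟨b, hb⟩ := exists_bot_of_connected_rooted hconn hroot
      obtain ⟨qf, hqf⟩ := exists_fixed_point (φ.comp ψ) (φ b)
        (φ.monotone (hb (ψ (φ b))))
      have hqf' : φ (ψ qf) = qf := hqf
      refine ⟨ψ qf, ?_⟩
      rw [dpsi_apply (fun q => ψ q) (ψ qf, φ (ψ qf))]
      simp [hqf']
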